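/- Energy inequality for the extracellular (media) equation: let δ, P̃, Pe, Da, K, T > 0, φ ∈ (0,1), let g : [0,T] → ℝ be continuous, let c₂ : [0,1] × [0,T] → ℝ be continuous, and let c₁ : [0,1] × [0,T] → ℝ be such that c₁, ∂_t c₁, ∂_x c₁, ∂_{xx} c₁ are continuous on [0,1] × [0,T], and suppose that φ·∂_t c₁ = ∂_{xx} c₁ - Pe·∂_x c₁ - Da·c₁ + (Da/K)·c₂ on (0,1) × (0,T], ∂_x c₁(1,t) = 0 for t ∈ (0,T], and ∂_x c₁(0,t) = Pe·c₁(0,t) + δ·P̃·(c₁(0,t) - g(t)) for t ∈ (0,T]. Then for all ε₂, ε₃ > 0 and t ∈ (0,T]: (φ/2)·(d/dt)∫_0^1 c₁(x,t)² dx + Da·∫_0^1 c₁(x,t)² dx + ∫_0^1 (∂_x c₁(x,t))² dx + (Pe/2)·c₁(1,t)² + (δ·P̃ + Pe/2)·c₁(0,t)² ≤ δ·P̃·(ε₂·g(t)² + c₁(0,t)²/(4ε₂)) + (Da/K)·(ε₃·∫_0^1 c₂(x,t)² dx + (1/(4ε₃))·∫_0^1 c₁(x,t)² dx). -/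

import Mathlib

open MeasureTheory intervalIntegral Set Filter Topology

private lemma young_aux {ε : ℝ} (hε : 0 < ε) (a b : ℝ) :
    a * b ≤ ε * b ^ 2 + a ^ 2 / (4 * ε) := by
  have h4 : (0:ℝ) < 4 * ε := by linarith
  have key : a * b - ε * b ^ 2 ≤ a ^ 2 / (4 * ε) := by
    rw [le_div_iff₀ h4]
    nlinarith [sq_nonneg (2 * ε * b - a)]
  linarith

/-- Energy inequality for the extracellular (media) equation: if `c₁` is a classical
solution of `φ·∂ₜc₁ = c₁_xx - Pe·c₁_x - Da·c₁ + (Da/K)·c₂` on `(0,1) × (0,T]` with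
`c₁_x(1,t) = 0` and `c₁_x(0,t) = Pe·c₁(0,t) + δ·Pt·(c₁(0,t) - g(t))`, then for all
`ε₂, ε₃ > 0` and `t ∈ (0,T]`:
`(φ/2)·(d/dt)∫ c₁² + Da·∫ c₁² + ∫ c₁_x² + (Pe/2)·c₁(1,t)² + (δ·Pt + Pe/2)·c₁(0,t)²
  ≤ δ·Pt·(ε₂·g(t)² + c₁(0,t)²/(4ε₂)) + (Da/K)·(ε₃·∫ c₂² + (1/(4ε₃))·∫ c₁²)`. -/
theorem media_equation_energy_inequality
    (δ Pt Pe Da K T φ : ℝ) (hδ : 0 < δ) (hPt : 0 < Pt) (hPe : 0 < Pe)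
    (hDa : 0 < Da) (hK : 0 < K) (hT : 0 < T) (hφ : φ ∈ Set.Ioo (0 : ℝ) 1)
    (g : ℝ → ℝ) (hg : ContinuousOn g (Set.Icc 0 T))
    (c₂ : ℝ → ℝ → ℝ)
    (hc₂ : ContinuousOn (fun p : ℝ × ℝ => c₂ p.1 p.2) (Set.Icc (0 : ℝ) 1 ×ˢ Set.Icc 0 T))
    (c₁ c₁t c₁x c₁xx : ℝ → ℝ → ℝ)
    (hc₁ : ContinuousOn (fun p : ℝ × ℝ => c₁ p.1 p.2) (Set.Icc (0 : ℝ) 1 ×ˢ Set.Icc 0 T))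
    (hc₁t : ContinuousOn (fun p : ℝ × ℝ => c₁t p.1 p.2) (Set.Icc (0 : ℝ) 1 ×ˢ Set.Icc 0 T))
    (hc₁x : ContinuousOn (fun p : ℝ × ℝ => c₁x p.1 p.2) (Set.Icc (0 : ℝ) 1 ×ˢ Set.Icc 0 T))
    (hc₁xx : ContinuousOn (fun p : ℝ × ℝ => c₁xx p.1 p.2) (Set.Icc (0 : ℝ) 1 ×ˢ Set.Icc 0 T))
    (hdt : ∀ x ∈ Set.Icc (0 : ℝ) 1, ∀ t ∈ Set.Icc 0 T,
      HasDerivWithinAt (fun s => c₁ x s) (c₁t x t) (Set.Icc 0 T) t)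
    (hdx : ∀ x ∈ Set.Icc (0 : ℝ) 1, ∀ t ∈ Set.Icc 0 T,
      HasDerivWithinAt (fun y => c₁ y t) (c₁x x t) (Set.Icc (0 : ℝ) 1) x)
    (hdxx : ∀ x ∈ Set.Icc (0 : ℝ) 1, ∀ t ∈ Set.Icc 0 T,
      HasDerivWithinAt (fun y => c₁x y t) (c₁xx x t) (Set.Icc (0 : ℝ) 1) x)
    (hpde : ∀ x ∈ Set.Ioo (0 : ℝ) 1, ∀ t ∈ Set.Ioc 0 T,
      φ * c₁t x t = c₁xx x t - Pe * c₁x x t - Da * c₁ x t + (Da / K) * c₂ x t)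
    (hbc1 : ∀ t ∈ Set.Ioc 0 T, c₁x 1 t = 0)
    (hbc0 : ∀ t ∈ Set.Ioc 0 T,
      c₁x 0 t = Pe * c₁ 0 t + δ * Pt * (c₁ 0 t - g t)) :
    ∀ ε₂ > (0 : ℝ), ∀ ε₃ > (0 : ℝ), ∀ t ∈ Set.Ioc 0 T,
      ∃ d : ℝ,
        HasDerivWithinAt (fun s => ∫ x in (0 : ℝ)..1, (c₁ x s) ^ 2) d (Set.Icc 0 T) t ∧
        (φ / 2) * d + Da * (∫ x in (0 : ℝ)..1, (c₁ x t) ^ 2) +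
            (∫ x in (0 : ℝ)..1, (c₁x x t) ^ 2) + (Pe / 2) * (c₁ 1 t) ^ 2 +
            (δ * Pt + Pe / 2) * (c₁ 0 t) ^ 2 ≤
          δ * Pt * (ε₂ * (g t) ^ 2 + (c₁ 0 t) ^ 2 / (4 * ε₂)) +
            (Da / K) * (ε₃ * (∫ x in (0 : ℝ)..1, (c₂ x t) ^ 2) +
              (1 / (4 * ε₃)) * ∫ x in (0 : ℝ)..1, (c₁ x t) ^ 2) := by
  have sliceT : ∀ (f : ℝ → ℝ → ℝ),
      ContinuousOn (fun p : ℝ × ℝ => f p.1 p.2) (Icc (0:ℝ) 1 ×ˢ Icc 0 T) →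
      ∀ x ∈ Icc (0:ℝ) 1, ContinuousOn (fun u => f x u) (Icc (0:ℝ) T) := by
    intro f hf x hx
    exact hf.comp ((continuous_const.prodMk continuous_id).continuousOn) (fun u hu => ⟨hx, hu⟩)
  have sliceX : ∀ (f : ℝ → ℝ → ℝ),
      ContinuousOn (fun p : ℝ × ℝ => f p.1 p.2) (Icc (0:ℝ) 1 ×ˢ Icc 0 T) →
      ∀ t ∈ Icc (0:ℝ) T, ContinuousOn (fun x => f x t) (Icc (0:ℝ) 1) := by
    intro f hf t ht
    exact hf.comp ((continuous_id.prodMk continuous_const).continuousOn) (fun x hx => ⟨hx, ht⟩)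
  set H : ℝ → ℝ → ℝ := fun x u => 2 * c₁ x u * c₁t x u with hHdef
  have hH : ContinuousOn (fun p : ℝ × ℝ => H p.1 p.2) (Icc (0:ℝ) 1 ×ˢ Icc 0 T) :=
    (continuousOn_const.mul hc₁).mul hc₁t
  have stepA : ∀ x ∈ Icc (0:ℝ) 1, ∀ s ∈ Icc (0:ℝ) T,
      ∫ u in (0:ℝ)..s, H x u = c₁ x s ^ 2 - c₁ x 0 ^ 2 := by
    intro x hx s hs
    refine integral_eq_sub_of_hasDeriv_right_of_le hs.1
      (((sliceT c₁ hc₁ x hx).mono (Icc_subset_Icc le_rfl hs.2)).pow 2) ?_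
      (((sliceT H hH x hx).mono (Icc_subset_Icc le_rfl hs.2)).intervalIntegrable_of_Icc hs.1)
    intro u hu
    have huT : u ∈ Icc (0:ℝ) T := ⟨hu.1.le, hu.2.le.trans hs.2⟩
    have hda : HasDerivAt (fun v => c₁ x v) (c₁t x u) u :=
      (hdt x hx u huT).hasDerivAt (Icc_mem_nhds hu.1 (lt_of_lt_of_le hu.2 hs.2))
    have h2 := hda.pow 2
    have : HasDerivAt (fun v => c₁ x v ^ 2) (H x u) u := by
      refine h2.congr_deriv ?_
      simp [hHdef]
    exact this.hasDerivWithinAt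
  have fubini : ∀ s ∈ Icc (0:ℝ) T,
      ∫ x in (0:ℝ)..1, ∫ u in (0:ℝ)..s, H x u
        = ∫ u in (0:ℝ)..s, ∫ x in (0:ℝ)..1, H x u := by
    intro s hs
    have hcomp : IntegrableOn (Function.uncurry H) (Icc (0:ℝ) 1 ×ˢ Icc 0 s) := by
      refine ContinuousOn.integrableOn_compact (isCompact_Icc.prod isCompact_Icc) ?_
      exact hH.mono (prod_mono_right (Icc_subset_Icc le_rfl hs.2))
    have h2 : IntegrableOn (Function.uncurry H) (Ioc (0:ℝ) 1 ×ˢ Ioc 0 s) :=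
      hcomp.mono_set (prod_mono Ioc_subset_Icc_self Ioc_subset_Icc_self)
    rw [IntegrableOn, Measure.volume_eq_prod, ← Measure.prod_restrict] at h2
    simp only [intervalIntegral.integral_of_le hs.1, intervalIntegral.integral_of_le zero_le_one]
    exact MeasureTheory.integral_integral_swap h2
  set G : ℝ → ℝ := fun u => ∫ x in (0:ℝ)..1, H x u with hGdef
  -- continuity of G on Icc 0 T
  have hGon : ContinuousOn G (Icc (0:ℝ) T) := by
    obtain ⟨M, hM⟩ := (isCompact_Icc.prod isCompact_Icc).exists_bound_of_continuousOn hH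
    intro t ht
    refine intervalIntegral.continuousWithinAt_of_dominated_interval
      (F := fun u x => H x u) (bound := fun _ => M) ?_ ?_ intervalIntegrable_const ?_
    · filter_upwards [self_mem_nhdsWithin] with u hu
      have hsub : Set.uIoc (0:ℝ) 1 ⊆ Icc (0:ℝ) 1 := by
        rw [uIoc_of_le zero_le_one]; exact Ioc_subset_Icc_self
      have hm : AEStronglyMeasurable (fun x => H x u) (volume.restrict (Icc (0:ℝ) 1)) :=
        (sliceX H hH u hu).aestronglyMeasurable measurableSet_Icc
      exact hm.mono_measure (Measure.restrict_mono hsub le_rfl)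
    · filter_upwards [self_mem_nhdsWithin] with u hu
      refine Filter.Eventually.of_forall fun x hx => ?_
      rw [uIoc_of_le zero_le_one] at hx
      exact hM (x, u) ⟨Ioc_subset_Icc_self hx, hu⟩
    · refine Filter.Eventually.of_forall fun x hx => ?_
      rw [uIoc_of_le zero_le_one] at hx
      exact (sliceT H hH x (Ioc_subset_Icc_self hx)) t ht
  have hGint : IntervalIntegrable G volume 0 T := hGon.intervalIntegrable_of_Icc hT.le
  -- decomposition of the energy
  have hFdecomp : ∀ s ∈ Icc (0:ℝ) T,
      (∫ x in (0:ℝ)..1, c₁ x s ^ 2)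
        = (∫ x in (0:ℝ)..1, c₁ x 0 ^ 2) + ∫ u in (0:ℝ)..s, G u := by
    intro s hs
    have h0T : (0:ℝ) ∈ Icc (0:ℝ) T := ⟨le_rfl, hT.le⟩
    have i1 : IntervalIntegrable (fun x => c₁ x s ^ 2) volume 0 1 :=
      ((sliceX c₁ hc₁ s hs).pow 2).intervalIntegrable_of_Icc zero_le_one
    have i0 : IntervalIntegrable (fun x => c₁ x 0 ^ 2) volume 0 1 :=
      ((sliceX c₁ hc₁ 0 h0T).pow 2).intervalIntegrable_of_Icc zero_le_one
    have h1 : ∫ x in (0:ℝ)..1, (c₁ x s ^ 2 - c₁ x 0 ^ 2) = ∫ u in (0:ℝ)..s, G u := by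
      rw [← fubini s hs]
      refine intervalIntegral.integral_congr fun x hx => ?_
      rw [uIcc_of_le zero_le_one] at hx
      exact (stepA x hx s hs).symm
    have h2 : ∫ x in (0:ℝ)..1, (c₁ x s ^ 2 - c₁ x 0 ^ 2)
        = (∫ x in (0:ℝ)..1, c₁ x s ^ 2) - ∫ x in (0:ℝ)..1, c₁ x 0 ^ 2 :=
      intervalIntegral.integral_sub i1 i0
    linarith [h1, h2]
  intro ε₂ hε₂ ε₃ hε₃ t ht
  have htIcc : t ∈ Icc (0:ℝ) T := ⟨ht.1.le, ht.2⟩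
  -- derivative of the primitive
  have hP : HasDerivWithinAt (fun s => ∫ u in (0:ℝ)..s, G u) (G t) (Icc (0:ℝ) T) t := by
    rcases eq_or_lt_of_le ht.2 with hEq | hlt
    · subst hEq
      have hmemIic : Icc (0:ℝ) t ∈ 𝓝[Iic t] t :=
        mem_nhdsWithin.mpr ⟨Ioi 0, isOpen_Ioi, ht.1, fun y hy => ⟨hy.1.le, hy.2⟩⟩
      have hm : StronglyMeasurableAtFilter G (𝓝[Iic t] t) volume :=
        ⟨Icc 0 t, hmemIic, hGon.aestronglyMeasurable measurableSet_Icc⟩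
      have hct : ContinuousWithinAt G (Iic t) t :=
        (hGon t ⟨ht.1.le, le_rfl⟩).mono_of_mem_nhdsWithin hmemIic
      exact (intervalIntegral.integral_hasDerivWithinAt_right (s := Set.Iic t)
        (t := Set.Iic t) hGint hm hct).mono (fun y hy => hy.2)
    · have hmem : Icc (0:ℝ) T ∈ 𝓝 t := Icc_mem_nhds ht.1 hlt
      have hm : StronglyMeasurableAtFilter G (𝓝 t) volume :=
        ⟨Icc 0 T, hmem, hGon.aestronglyMeasurable measurableSet_Icc⟩
      have hct : ContinuousAt G t := (hGon t htIcc).continuousAt hmem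
      have hint : IntervalIntegrable G volume 0 t :=
        (hGon.mono (Icc_subset_Icc le_rfl ht.2)).intervalIntegrable_of_Icc ht.1.le
      exact (intervalIntegral.integral_hasDerivAt_right hint hm hct).hasDerivWithinAt
  have hF : HasDerivWithinAt (fun s => ∫ x in (0:ℝ)..1, (c₁ x s) ^ 2) (G t)
      (Icc (0:ℝ) T) t := by
    have hca := hP.const_add (∫ x in (0:ℝ)..1, c₁ x 0 ^ 2)
    exact hca.congr (fun s hs => hFdecomp s hs) (hFdecomp t htIcc)
  refine ⟨G t, hF, ?_⟩
  -- slice continuity at time t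
  have ca := sliceX c₁ hc₁ t htIcc
  have cax := sliceX c₁x hc₁x t htIcc
  have caxx := sliceX c₁xx hc₁xx t htIcc
  have cat := sliceX c₁t hc₁t t htIcc
  have cb := sliceX c₂ hc₂ t htIcc
  -- integration by parts
  have hI1 : ∫ x in (0:ℝ)..1, (c₁x x t ^ 2 + c₁ x t * c₁xx x t)
      = c₁ 1 t * c₁x 1 t - c₁ 0 t * c₁x 0 t := by
    refine integral_eq_sub_of_hasDeriv_right_of_le zero_le_one (ca.mul cax) ?_
      (((cax.pow 2).add (ca.mul caxx)).intervalIntegrable_of_Icc zero_le_one)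
    intro x hx
    have hxI : x ∈ Icc (0:ℝ) 1 := Ioo_subset_Icc_self hx
    have h1 : HasDerivAt (fun y => c₁ y t) (c₁x x t) x :=
      (hdx x hxI t htIcc).hasDerivAt (Icc_mem_nhds hx.1 hx.2)
    have h2 : HasDerivAt (fun y => c₁x y t) (c₁xx x t) x :=
      (hdxx x hxI t htIcc).hasDerivAt (Icc_mem_nhds hx.1 hx.2)
    have := h1.mul h2
    have heq : HasDerivAt (fun y => c₁ y t * c₁x y t)
        (c₁x x t ^ 2 + c₁ x t * c₁xx x t) x := by
      refine this.congr_deriv ?_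
      ring
    exact heq.hasDerivWithinAt
  have hI2 : ∫ x in (0:ℝ)..1, c₁ x t * c₁x x t = c₁ 1 t ^ 2 / 2 - c₁ 0 t ^ 2 / 2 := by
    refine integral_eq_sub_of_hasDeriv_right_of_le zero_le_one ((ca.pow 2).div_const 2) ?_
      ((ca.mul cax).intervalIntegrable_of_Icc zero_le_one)
    intro x hx
    have hxI : x ∈ Icc (0:ℝ) 1 := Ioo_subset_Icc_self hx
    have h1 : HasDerivAt (fun y => c₁ y t) (c₁x x t) x :=
      (hdx x hxI t htIcc).hasDerivAt (Icc_mem_nhds hx.1 hx.2)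
    have h2 := (h1.pow 2).div_const 2
    have heq : HasDerivAt (fun y => c₁ y t ^ 2 / 2) (c₁ x t * c₁x x t) x := by
      refine h2.congr_deriv ?_
      push_cast
      ring
    exact heq.hasDerivWithinAt
  -- integrated PDE
  have hpde' : ∫ x in (0:ℝ)..1, φ * (c₁ x t * c₁t x t)
      = ∫ x in (0:ℝ)..1, (c₁ x t * c₁xx x t - Pe * (c₁ x t * c₁x x t)
          - Da * c₁ x t ^ 2 + (Da / K) * (c₁ x t * c₂ x t)) := by
    refine intervalIntegral.integral_congr_ae ?_
    have hne : ∀ᵐ x : ℝ, x ≠ (1:ℝ) := by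
      rw [ae_iff]
      simp only [ne_eq, not_not]
      have : {x : ℝ | x = 1} = {1} := by ext y; simp
      rw [this]
      exact measure_singleton 1
    filter_upwards [hne] with x hx1 hxI
    rw [uIoc_of_le zero_le_one] at hxI
    have hxO : x ∈ Ioo (0:ℝ) 1 := ⟨hxI.1, lt_of_le_of_ne hxI.2 hx1⟩
    have hp := hpde x hxO t ht
    linear_combination (c₁ x t) * hp
  -- integrability of pieces
  have iA : IntervalIntegrable (fun x => c₁ x t * c₁xx x t) volume 0 1 :=
    (ca.mul caxx).intervalIntegrable_of_Icc zero_le_one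
  have iB : IntervalIntegrable (fun x => Pe * (c₁ x t * c₁x x t)) volume 0 1 :=
    (continuousOn_const.mul (ca.mul cax)).intervalIntegrable_of_Icc zero_le_one
  have iC : IntervalIntegrable (fun x => Da * c₁ x t ^ 2) volume 0 1 :=
    (continuousOn_const.mul (ca.pow 2)).intervalIntegrable_of_Icc zero_le_one
  have iD : IntervalIntegrable (fun x => (Da / K) * (c₁ x t * c₂ x t)) volume 0 1 :=
    (continuousOn_const.mul (ca.mul cb)).intervalIntegrable_of_Icc zero_le_one
  have ixx2 : IntervalIntegrable (fun x => c₁x x t ^ 2) volume 0 1 :=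
    (cax.pow 2).intervalIntegrable_of_Icc zero_le_one
  rw [intervalIntegral.integral_add ((iA.sub iB).sub iC) iD,
      intervalIntegral.integral_sub (iA.sub iB) iC,
      intervalIntegral.integral_sub iA iB] at hpde'
  simp only [intervalIntegral.integral_const_mul] at hpde'
  rw [intervalIntegral.integral_add ixx2 iA] at hI1
  -- G t in terms of the product integral
  have hGt2 : G t = 2 * ∫ x in (0:ℝ)..1, c₁ x t * c₁t x t := by
    rw [show G t = ∫ x in (0:ℝ)..1, 2 * c₁ x t * c₁t x t from rfl,
        ← intervalIntegral.integral_const_mul]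
    exact intervalIntegral.integral_congr fun x _ => by ring
  -- boundary conditions
  have hb1 := hbc1 t ht
  have hb0 := hbc0 t ht
  -- Young inequality for the source term
  have hID : (∫ x in (0:ℝ)..1, c₁ x t * c₂ x t)
      ≤ ε₃ * (∫ x in (0:ℝ)..1, c₂ x t ^ 2)
        + (∫ x in (0:ℝ)..1, c₁ x t ^ 2) / (4 * ε₃) := by
    have i1 : IntervalIntegrable (fun x => c₁ x t * c₂ x t) volume 0 1 :=
      (ca.mul cb).intervalIntegrable_of_Icc zero_le_one
    have i2 : IntervalIntegrable (fun x => ε₃ * c₂ x t ^ 2 + c₁ x t ^ 2 / (4 * ε₃)) volume 0 1 :=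
      ((continuousOn_const.mul (cb.pow 2)).add ((ca.pow 2).div_const _)).intervalIntegrable_of_Icc
        zero_le_one
    have hmono := intervalIntegral.integral_mono_on zero_le_one i1 i2
      (fun x _ => young_aux hε₃ (c₁ x t) (c₂ x t))
    rwa [intervalIntegral.integral_add (f := fun x => ε₃ * c₂ x t ^ 2) (g := fun x => c₁ x t ^ 2 / (4 * ε₃))
        ((continuousOn_const.mul (cb.pow 2)).intervalIntegrable_of_Icc zero_le_one)
        (((ca.pow 2).div_const _).intervalIntegrable_of_Icc zero_le_one),
      intervalIntegral.integral_const_mul, intervalIntegral.integral_div] at hmono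
  have hdiv : (∫ x in (0:ℝ)..1, c₁ x t ^ 2) / (4 * ε₃)
      = (1 / (4 * ε₃)) * ∫ x in (0:ℝ)..1, c₁ x t ^ 2 := by ring
  have hID' : (∫ x in (0:ℝ)..1, c₁ x t * c₂ x t)
      ≤ ε₃ * (∫ x in (0:ℝ)..1, c₂ x t ^ 2)
        + (1 / (4 * ε₃)) * ∫ x in (0:ℝ)..1, c₁ x t ^ 2 := by linarith [hID, hdiv]
  -- Young inequality for the boundary term
  have hY1 : c₁ 0 t * g t ≤ ε₂ * g t ^ 2 + c₁ 0 t ^ 2 / (4 * ε₂) :=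
    young_aux hε₂ (c₁ 0 t) (g t)
  have h1 : δ * Pt * (c₁ 0 t * g t) ≤ δ * Pt * (ε₂ * g t ^ 2 + c₁ 0 t ^ 2 / (4 * ε₂)) :=
    mul_le_mul_of_nonneg_left hY1 (by positivity)
  have h2 : (Da / K) * (∫ x in (0:ℝ)..1, c₁ x t * c₂ x t)
      ≤ (Da / K) * (ε₃ * (∫ x in (0:ℝ)..1, c₂ x t ^ 2)
          + (1 / (4 * ε₃)) * ∫ x in (0:ℝ)..1, c₁ x t ^ 2) :=
    mul_le_mul_of_nonneg_left hID' (by positivity)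
  have heq : (φ / 2) * (G t) + Da * (∫ x in (0:ℝ)..1, c₁ x t ^ 2)
      + (∫ x in (0:ℝ)..1, c₁x x t ^ 2) + (Pe / 2) * c₁ 1 t ^ 2
      + (δ * Pt + Pe / 2) * c₁ 0 t ^ 2
      = δ * Pt * (c₁ 0 t * g t) + (Da / K) * (∫ x in (0:ℝ)..1, c₁ x t * c₂ x t) := by
    linear_combination (φ / 2) * hGt2 + hpde' + hI1 - Pe * hI2
      + (c₁ 1 t) * hb1 - (c₁ 0 t) * hb0
  linarith [h1, h2, heq]
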